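/- Let A_f be the 2×4 real matrix (1/√2)·[[1,0,−1,0],[0,1,0,−1]], let β > 0, α_f ≥ 0, t = α_f/β, and let a ∈ ℝ⁴ be such that A_f·a ≠ 0. Then the unique minimizer over z ∈ ℝ⁴ of the function L_f(z) = (β/2)·‖z − a‖₂² + α_f·‖A_f·z‖₂ is z* = a − (min(‖A_f·a‖₂, t)/‖A_f·a‖₂)·A_fᵀ·A_f·a. -/

import Mathlib

open scoped BigOperators
open Matrix

/-- The Euclidean norm on `ℝⁿ`. -/
noncomputable def euclNorm {n : ℕ} (v : Fin n → ℝ) : ℝ := Real.sqrt (∑ i, v i ^ 2)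

/-- The matrix `A_f = (1/√2)·[[1,0,−1,0],[0,1,0,−1]]`. -/
noncomputable def Af : Matrix (Fin 2) (Fin 4) ℝ :=
  (1 / Real.sqrt 2) • !![1, 0, -1, 0; 0, 1, 0, -1]

lemma Af_mulVec (z : Fin 4 → ℝ) :
    Af.mulVec z = ![(z 0 - z 2)/Real.sqrt 2, (z 1 - z 3)/Real.sqrt 2] := by
  funext i
  fin_cases i <;>
    simp [Af, Matrix.mulVec, dotProduct, Fin.sum_univ_four] <;> ring

lemma euclNorm_two (x y : ℝ) : euclNorm ![x, y] = Real.sqrt (x^2 + y^2) := by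
  simp [euclNorm, Fin.sum_univ_two]

lemma norm_Af (z : Fin 4 → ℝ) :
    euclNorm (Af.mulVec z) = Real.sqrt (((z 0 - z 2)^2 + (z 1 - z 3)^2)/2) := by
  rw [Af_mulVec, euclNorm_two]
  have h2 : (Real.sqrt 2)^2 = 2 := Real.sq_sqrt (by norm_num)
  have h0 : Real.sqrt 2 ≠ 0 := by positivity
  congr 1
  field_simp
  rw [h2]; ring

lemma AtA (a : Fin 4 → ℝ) :
    Afᵀ.mulVec (Af.mulVec a) =
      ![(a 0 - a 2)/2, (a 1 - a 3)/2, -((a 0 - a 2)/2), -((a 1 - a 3)/2)] := by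
  have h2 : Real.sqrt 2 * Real.sqrt 2 = 2 := Real.mul_self_sqrt (by norm_num)
  have h0 : Real.sqrt 2 ≠ 0 := by positivity
  rw [Af_mulVec]
  funext i
  fin_cases i <;>
    simp [Af, Matrix.mulVec, dotProduct, Fin.sum_univ_two, Matrix.transpose_apply] <;>
    field_simp <;> rw [Real.sq_sqrt (by norm_num)] <;> ring

lemma euclNorm_sq_four (v : Fin 4 → ℝ) :
    euclNorm v ^ 2 = v 0 ^2 + v 1 ^2 + v 2 ^2 + v 3 ^2 := by
  rw [euclNorm, Real.sq_sqrt (by positivity), Fin.sum_univ_four]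

lemma cs2 (u0 u1 d0 d1 S n : ℝ) (hS : 0 ≤ S) (hn : 0 ≤ n)
    (hS2 : S^2 = (u0^2 + u1^2)/2) (hn2 : n^2 = (d0^2 + d1^2)/2) :
    u0*d0 + u1*d1 ≤ 2*S*n := by
  have hprod : (S^2)*(n^2) = ((u0^2+u1^2)/2)*((d0^2+d1^2)/2) := by rw [hS2, hn2]
  have h4 : (u0*d0 + u1*d1)^2 ≤ (2*S*n)^2 := by
    nlinarith [sq_nonneg (u0*d1 - u1*d0), hprod]
  nlinarith [h4, mul_nonneg hS hn, sq_nonneg (u0*d0 + u1*d1 - 2*S*n)]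

lemma aux_ineq (β t n S Q J : ℝ) (hβ : 0 < β)
    (hS : 0 ≤ S) (hQ : S^2 - J + n^2 ≤ Q) (hCS : J ≤ 2*S*n) :
    β/2*(min n t)^2 + β*t*(n - min n t) ≤ β/2*Q + β*t*S := by
  rcases le_total n t with h | h
  · rw [min_eq_left h]
    nlinarith [mul_nonneg (mul_nonneg hβ.le hS) (sub_nonneg.2 h),
      mul_nonneg hβ.le (sq_nonneg S),
      mul_le_mul_of_nonneg_left hCS (by positivity : (0:ℝ) ≤ β/2),
      mul_le_mul_of_nonneg_left hQ (by positivity : (0:ℝ) ≤ β/2)]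
  · rw [min_eq_right h]
    nlinarith [mul_nonneg hβ.le (sq_nonneg (S - (n - t))),
      mul_le_mul_of_nonneg_left hCS (by positivity : (0:ℝ) ≤ β/2),
      mul_le_mul_of_nonneg_left hQ (by positivity : (0:ℝ) ≤ β/2)]

lemma aux_eq (β t n S Q J : ℝ) (hβ : 0 < β)
    (hS : 0 ≤ S) (hQ : S^2 - J + n^2 ≤ Q) (hCS : J ≤ 2*S*n)
    (heq : β/2*Q + β*t*S = β/2*(min n t)^2 + β*t*(n - min n t)) :
    Q = S^2 - J + n^2 ∧ J = 2*S*n ∧ S = n - min n t := by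
  set m : ℝ := min n t with hm
  have hmn : m ≤ n := min_le_left _ _
  have hmt : m ≤ t := min_le_right _ _
  have hnm : (n - m)*(t - m) = 0 := by
    rcases le_total n t with h | h
    · rw [hm, min_eq_left h]; ring
    · rw [hm, min_eq_right h]; ring
  have key : β/2*(Q - (S^2 - J + n^2)) + β/2*(2*S*n - J)
      + β/2*(S - (n - m))^2 + β*((t - m)*S) = β*((n-m)*(t-m)) := by
    linear_combination heq
  rw [hnm, mul_zero] at key
  have hA : 0 ≤ Q - (S^2 - J + n^2) := by linarith
  have hB : 0 ≤ 2*S*n - J := by linarith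
  have hC : 0 ≤ (S - (n - m))^2 := sq_nonneg _
  have hD : 0 ≤ (t - m)*S := mul_nonneg (by linarith) hS
  have key' : (Q - (S^2 - J + n^2)) + (2*S*n - J) + (S - (n - m))^2 + 2*((t-m)*S) = 0 := by
    have h2 : β * ((Q - (S^2 - J + n^2)) + (2*S*n - J) + (S - (n - m))^2 + 2*((t-m)*S)) = 0 := by
      linear_combination 2*key
    exact (mul_eq_zero.1 h2).resolve_left hβ.ne'
  refine ⟨by linarith, by linarith, ?_⟩
  have hC0 : (S - (n - m))^2 = 0 := by linarith
  have := pow_eq_zero_iff (n := 2) (by norm_num) |>.1 hC0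
  linarith

lemma zfacts (a z : Fin 4 → ℝ) (d0 d1 n : ℝ)
    (hd0 : d0 = a 0 - a 2) (hd1 : d1 = a 1 - a 3)
    (hn0 : 0 ≤ n) (hn2 : n^2 = (d0^2 + d1^2)/2) :
    0 ≤ euclNorm (Af.mulVec z) ∧
    euclNorm (Af.mulVec z)^2 = ((z 0 - z 2)^2 + (z 1 - z 3)^2)/2 ∧
    (z 0 - a 0)^2 + (z 1 - a 1)^2 + (z 2 - a 2)^2 + (z 3 - a 3)^2
      = (euclNorm (Af.mulVec z)^2 - ((z 0 - z 2)*d0 + (z 1 - z 3)*d1) + n^2)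
        + (((z 0 - a 0) + (z 2 - a 2))^2 + ((z 1 - a 1) + (z 3 - a 3))^2)/2 ∧
    (z 0 - z 2)*d0 + (z 1 - z 3)*d1 ≤ 2*euclNorm (Af.mulVec z)*n := by
  have hS_eq : euclNorm (Af.mulVec z)
      = Real.sqrt (((z 0 - z 2)^2 + (z 1 - z 3)^2)/2) := norm_Af z
  have hS0 : 0 ≤ euclNorm (Af.mulVec z) := by rw [hS_eq]; positivity
  have hS2 : euclNorm (Af.mulVec z)^2 = ((z 0 - z 2)^2 + (z 1 - z 3)^2)/2 := by
    rw [hS_eq, Real.sq_sqrt (by positivity)]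
  subst hd0 hd1
  refine ⟨hS0, hS2, ?_, cs2 _ _ _ _ _ _ hS0 hn0 hS2 hn2⟩
  linear_combination -hS2 - hn2

set_option maxHeartbeats 1000000 in
/-- Proposition 2 of the paper: the unique minimizer of
`L_f(z) = (β/2)‖z − a‖₂² + α_f‖A_f z‖₂` is
`z* = a − (min(‖A_f a‖₂, α_f/β)/‖A_f a‖₂) · A_fᵀ A_f a`, provided `A_f a ≠ 0`. -/
theorem prox_Af_norm
    (β αf : ℝ) (hβ : 0 < β) (hαf : 0 ≤ αf)
    (a : Fin 4 → ℝ) (ha : Af.mulVec a ≠ 0) :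
    let t : ℝ := αf / β
    let Lf : (Fin 4 → ℝ) → ℝ := fun z =>
      β / 2 * euclNorm (z - a) ^ 2 + αf * euclNorm (Af.mulVec z)
    let zstar : Fin 4 → ℝ :=
      a - (min (euclNorm (Af.mulVec a)) t / euclNorm (Af.mulVec a)) •
        (Afᵀ.mulVec (Af.mulVec a))
    (∀ z : Fin 4 → ℝ, Lf zstar ≤ Lf z) ∧
    (∀ z : Fin 4 → ℝ, Lf z = Lf zstar → z = zstar) := by
  intro t Lf zstar
  set d0 : ℝ := a 0 - a 2 with hd0
  set d1 : ℝ := a 1 - a 3 with hd1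
  set n : ℝ := euclNorm (Af.mulVec a) with hn_def
  have hn_eq : n = Real.sqrt ((d0^2 + d1^2)/2) := by rw [hn_def, norm_Af]
  have hn0 : 0 ≤ n := by rw [hn_eq]; positivity
  have hdd : 0 < d0^2 + d1^2 := by
    rcases lt_or_eq_of_le (by positivity : (0:ℝ) ≤ d0^2 + d1^2) with h | h
    · exact h
    · exfalso
      have h0 : d0 = 0 ∧ d1 = 0 := by
        constructor <;> nlinarith [sq_nonneg d0, sq_nonneg d1]
      apply ha
      rw [Af_mulVec]
      funext i
      fin_cases i <;> simp [← hd0, ← hd1, h0.1, h0.2]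
  have hn : 0 < n := by
    rw [hn_eq]
    exact Real.sqrt_pos.2 (by positivity)
  have hn2 : n^2 = (d0^2 + d1^2)/2 := by
    rw [hn_eq, Real.sq_sqrt (by positivity)]
  have ht0 : 0 ≤ t := div_nonneg hαf hβ.le
  have hαf_eq : αf = β * t := by rw [show t = αf / β from rfl]; field_simp
  set m : ℝ := min n t with hm_def
  have hmn : m ≤ n := min_le_left _ _
  have hm0 : 0 ≤ m := le_min hn0 ht0
  -- zstar coordinates
  have hzstar : ∀ i, zstar i = a i - (m/n) * (![d0/2, d1/2, -(d0/2), -(d1/2)] i) := by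
    intro i
    simp only [zstar, Pi.sub_apply, Pi.smul_apply, smul_eq_mul, AtA, ← hn_def, ← hm_def,
      ← hd0, ← hd1]
  have hz0 : zstar 0 = a 0 - (m/n) * (d0/2) := by rw [hzstar 0]; norm_num
  have hz1 : zstar 1 = a 1 - (m/n) * (d1/2) := by rw [hzstar 1]; norm_num
  have hz2 : zstar 2 = a 2 + (m/n) * (d0/2) := by rw [hzstar 2]; norm_num [Matrix.cons_val_two]
  have hz3 : zstar 3 = a 3 + (m/n) * (d1/2) := by rw [hzstar 3]; norm_num [Matrix.cons_val_three]
  -- value of Lf at zstar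
  have hLz_norm : euclNorm (Af.mulVec zstar) = n - m := by
    rw [norm_Af, hz0, hz1, hz2, hz3]
    have h1 : (a 0 - m / n * (d0 / 2) - (a 2 + m / n * (d0 / 2)))^2
        + (a 1 - m / n * (d1 / 2) - (a 3 + m / n * (d1 / 2)))^2
        = (1 - m/n)^2 * (d0^2 + d1^2) := by rw [hd0, hd1]; ring
    rw [h1]
    have h2 : (1 - m/n)^2 * (d0^2 + d1^2) / 2 = (1 - m/n)^2 * ((d0^2+d1^2)/2) := by ring
    rw [h2, Real.sqrt_mul (by positivity), Real.sqrt_sq (by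
      have : m/n ≤ 1 := (div_le_one hn).2 hmn
      linarith), ← hn_eq]
    field_simp
  have hLz_sq : euclNorm (zstar - a) ^ 2 = m^2 := by
    rw [euclNorm_sq_four]
    simp only [Pi.sub_apply, hz0, hz1, hz2, hz3]
    have h1 : (a 0 - m / n * (d0 / 2) - a 0)^2 + (a 1 - m / n * (d1 / 2) - a 1)^2
        + (a 2 + m / n * (d0 / 2) - a 2)^2 + (a 3 + m / n * (d1 / 2) - a 3)^2
        = (m/n)^2 * ((d0^2 + d1^2)/2) := by ring
    rw [h1, ← hn2]
    field_simp
  have hLstar : Lf zstar = β/2 * m^2 + β*t * (n - m) := by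
    simp only [Lf, hLz_sq, hLz_norm, hαf_eq]
  have key : ∀ z : Fin 4 → ℝ,
      Lf z = β/2 * ((z 0 - a 0)^2 + (z 1 - a 1)^2 + (z 2 - a 2)^2 + (z 3 - a 3)^2)
        + β*t * euclNorm (Af.mulVec z) := by
    intro z
    simp only [Lf, euclNorm_sq_four, Pi.sub_apply, hαf_eq]
  -- generic facts about an arbitrary z
  clear_value t Lf zstar d0 d1 n m
  constructor
  · intro z
    rw [hLstar, key z, hm_def]
    obtain ⟨hS0, hS2, hQ_eq, hCS⟩ := zfacts a z d0 d1 n hd0 hd1 hn0 hn2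
    have hQ : euclNorm (Af.mulVec z)^2 - ((z 0 - z 2)*d0 + (z 1 - z 3)*d1) + n^2
        ≤ (z 0 - a 0)^2 + (z 1 - a 1)^2 + (z 2 - a 2)^2 + (z 3 - a 3)^2 := by
      linarith [hQ_eq, sq_nonneg ((z 0 - a 0) + (z 2 - a 2)),
        sq_nonneg ((z 1 - a 1) + (z 3 - a 3))]
    exact aux_ineq β t n _ _ _ hβ hS0 hQ hCS
  · intro z hz
    rw [hLstar, key z, hm_def] at hz
    obtain ⟨hS0, hS2, hQ_eq, hCS⟩ := zfacts a z d0 d1 n hd0 hd1 hn0 hn2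
    have hQ : euclNorm (Af.mulVec z)^2 - ((z 0 - z 2)*d0 + (z 1 - z 3)*d1) + n^2
        ≤ (z 0 - a 0)^2 + (z 1 - a 1)^2 + (z 2 - a 2)^2 + (z 3 - a 3)^2 := by
      linarith [hQ_eq, sq_nonneg ((z 0 - a 0) + (z 2 - a 2)),
        sq_nonneg ((z 1 - a 1) + (z 3 - a 3))]
    obtain ⟨hQ0, hJ0, hS_nm⟩ := aux_eq β t n _ _ _ hβ hS0 hQ hCS hz
    set S : ℝ := euclNorm (Af.mulVec z) with hS_def
    have hsq : ((z 0 - a 0) + (z 2 - a 2))^2 + ((z 1 - a 1) + (z 3 - a 3))^2 = 0 := by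
      linarith [hQ_eq, hQ0]
    have hA : (z 0 - a 0) + (z 2 - a 2) = 0 := by
      have h1 : ((z 0 - a 0) + (z 2 - a 2))^2 = 0 := le_antisymm
        (by linarith [sq_nonneg ((z 1 - a 1) + (z 3 - a 3))]) (sq_nonneg _)
      exact pow_eq_zero_iff (n := 2) (by norm_num) |>.1 h1
    have hB : (z 1 - a 1) + (z 3 - a 3) = 0 := by
      have h1 : ((z 1 - a 1) + (z 3 - a 3))^2 = 0 := le_antisymm
        (by linarith [sq_nonneg ((z 0 - a 0) + (z 2 - a 2))]) (sq_nonneg _)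
      exact pow_eq_zero_iff (n := 2) (by norm_num) |>.1 h1
    have hcross : (z 0 - z 2)*d1 - (z 1 - z 3)*d0 = 0 := by
      have h1 : ((z 0 - z 2)*d1 - (z 1 - z 3)*d0)^2 = 0 := by
        linear_combination (-2*(d0^2+d1^2))*hS2 + (-4*S^2)*hn2
          - ((z 0 - z 2)*d0 + (z 1 - z 3)*d1 + 2*S*n)*hJ0
      exact pow_eq_zero_iff (n := 2) (by norm_num) |>.1 h1
    have hu0 : n * (z 0 - z 2) = S * d0 := by
      have h2 : (2*n) * (n * (z 0 - z 2)) = (2*n) * (S * d0) := by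
        linear_combination (2*(z 0 - z 2))*hn2 + d1*hcross + d0*hJ0
      exact mul_left_cancel₀ (by positivity) h2
    have hu1 : n * (z 1 - z 3) = S * d1 := by
      have h2 : (2*n) * (n * (z 1 - z 3)) = (2*n) * (S * d1) := by
        linear_combination (2*(z 1 - z 3))*hn2 - d0*hcross + d1*hJ0
      exact mul_left_cancel₀ (by positivity) h2
    rw [← hm_def] at hS_nm
    funext i
    fin_cases i
    · show z 0 = zstar 0
      rw [hz0]
      field_simp
      linear_combination n*hA + hu0 + d0*hS_nm + n*hd0
    · show z 1 = zstar 1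
      rw [hz1]
      field_simp
      linear_combination n*hB + hu1 + d1*hS_nm + n*hd1
    · show z 2 = zstar 2
      rw [hz2]
      field_simp
      linear_combination n*hA - hu0 - d0*hS_nm - n*hd0
    · show z 3 = zstar 3
      rw [hz3]
      field_simp
      linear_combination n*hB - hu1 - d1*hS_nm - n*hd1
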